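/- Let $c$ be a condition $(k, \sigma_0, \ldots, \sigma_{k-1}, P)$ where $P$ is a nonempty collection of ordered $k$-partitions of $\omega$, and suppose for every string $\tau = \tau_0 \oplus \cdots \oplus \tau_{k-1}$ with $P_\tau \neq \emptyset$ there is an $X \in P_\tau$ and $i < k$ such that $X_i$ contains some $m \in A$ and some $n \in \overline{A}$ with $m, n \geq |\tau_i|$. Then there exists $Y = Y_0 \oplus \cdots \oplus Y_{k-1} \in \overline{P}$ (the closure of $P$ in Cantor space, assuming $P$ is closed, so $Y \in P$) and an index $i < k$ such that both $Y_i \cap A$ and $Y_i \cap \overline{A}$ are infinite. -/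

import Mathlib

/-- A string `τ` is an initial segment of `X : ℕ → Bool`. -/
def IsPrefixOfFun (τ : List Bool) (X : ℕ → Bool) : Prop :=
  ∀ i (h : i < τ.length), X i = τ.get ⟨i, h⟩

/-- Acceptability (Lemma 5.1, claim): let `P` be a nonempty closed class of ordered
`k`-partitions of `ω` (coded as `Fin k → ℕ → Bool` with the product topology). If for every
tuple of strings `τ` with `P_τ ≠ ∅` there are `X ∈ P_τ`, `i < k`, and `a ∈ A`, `b ∈ Aᶜ` in
`X i` beyond `|τ i|`, then some `Y ∈ P` has a part `Y i` meeting both `A` and `Aᶜ`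
infinitely. -/
theorem stmt6 (k : ℕ) (hk : 0 < k) (A : Set ℕ) (P : Set (Fin k → ℕ → Bool))
    (hne : P.Nonempty) (hcl : IsClosed P)
    (hpart : ∀ X ∈ P, ∀ n : ℕ, ∃ i, X i n = true)
    (hstep : ∀ τ : Fin k → List Bool,
      (∃ X ∈ P, ∀ i, IsPrefixOfFun (τ i) (X i)) →
      ∃ X ∈ P, (∀ i, IsPrefixOfFun (τ i) (X i)) ∧
        ∃ i : Fin k, ∃ a b : ℕ, (τ i).length ≤ a ∧ (τ i).length ≤ b ∧
          X i a = true ∧ X i b = true ∧ a ∈ A ∧ b ∉ A) :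
    ∃ Y ∈ P, ∃ i : Fin k,
      {n | Y i n = true ∧ n ∈ A}.Infinite ∧ {n | Y i n = true ∧ n ∉ A}.Infinite := by
  classical
  -- `Good τ` : some member of `P` extends `τ`, witnessed by `X ∈ P`
  let Good : (Fin k → List Bool) → Prop :=
    fun τ => ∃ X ∈ P, ∀ i, IsPrefixOfFun (τ i) (X i)
  -- One step of the construction.
  have step : ∀ τ : Fin k → List Bool, Good τ →
      ∃ p : (Fin k → List Bool) × (Fin k → ℕ → Bool) × Fin k × ℕ × ℕ,
        (p.2.1 ∈ P ∧ ∀ j, IsPrefixOfFun (p.1 j) (p.2.1 j)) ∧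
        (∀ j, τ j <+: p.1 j ∧ (τ j).length < (p.1 j).length) ∧
        (p.2.2.2.1 < (p.1 p.2.2.1).length ∧ p.2.2.2.2 < (p.1 p.2.2.1).length ∧
          (τ p.2.2.1).length ≤ p.2.2.2.1 ∧ (τ p.2.2.1).length ≤ p.2.2.2.2 ∧
          p.2.1 p.2.2.1 p.2.2.2.1 = true ∧ p.2.1 p.2.2.1 p.2.2.2.2 = true ∧
          p.2.2.2.1 ∈ A ∧ p.2.2.2.2 ∉ A) := by
    intro τ hτ
    obtain ⟨X, hXP, hXpre, i, a, b, hla, hlb, hXa, hXb, haA, hbA⟩ := hstep τ hτ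
    -- new length
    set L : ℕ := (max a b).max (Finset.univ.sup fun j : Fin k => (τ j).length) + 1 with hL
    have hLa : a < L :=
      Nat.lt_succ_of_le (le_trans (le_max_left a b) (le_max_left _ _))
    have hLb : b < L :=
      Nat.lt_succ_of_le (le_trans (le_max_right a b) (le_max_left _ _))
    have hLτ : ∀ j, (τ j).length < L := fun j =>
      Nat.lt_succ_of_le (le_trans
        (Finset.le_sup (f := fun j : Fin k => (τ j).length) (Finset.mem_univ j))
        (le_max_right (max a b) _))
    refine ⟨⟨fun j => List.ofFn fun m : Fin L => X j m, X, i, a, b⟩, ⟨hXP, ?_⟩, ?_, ?_⟩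
    · -- X extends the new strings
      intro j m hm
      simp only [List.get_ofFn]
      simp only [List.length_ofFn] at hm
      simp
    · -- the new strings extend the old ones, strictly
      intro j
      constructor
      · have heq : τ j = (List.ofFn fun m : Fin L => X j m).take (τ j).length := by
          apply List.ext_get
          · have := hLτ j; simp only [List.length_take, List.length_ofFn]; omega
          · intro m h1 h2
            simp only [List.get_eq_getElem, List.getElem_take, List.getElem_ofFn]
            exact (hXpre j m h1).symm
        rw [heq]
        exact List.take_prefix _ _
      · simpa only [List.length_ofFn] using hLτ j
    · -- the witnesses
      refine ⟨by simpa using hLa, by simpa using hLb, hla, hlb, hXa, hXb, haA, hbA⟩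
  choose F hF1 hF2 hF3 using step
  -- the initial good tuple
  obtain ⟨X0, hX0⟩ := hne
  have good0 : Good (fun _ => ([] : List Bool)) :=
    ⟨X0, hX0, fun i m hm => by simp at hm⟩
  have goodF : ∀ τ hτ, Good (F τ hτ).1 := fun τ hτ =>
    ⟨(F τ hτ).2.1, (hF1 τ hτ).1, (hF1 τ hτ).2⟩
  -- the sequence of tuples
  let g : ℕ → {τ : Fin k → List Bool // Good τ} := fun n =>
    Nat.rec ⟨fun _ => [], good0⟩ (fun _ p => ⟨(F p.1 p.2).1, goodF p.1 p.2⟩) n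
  let T : ℕ → Fin k → List Bool := fun n => (g n).1
  have hgsucc : ∀ n, T (n + 1) = (F (T n) (g n).2).1 := fun n => rfl
  -- prefix chain
  have chain1 : ∀ n j, T n j <+: T (n + 1) j := by
    intro n j
    rw [hgsucc]
    exact (hF2 (T n) (g n).2 j).1
  have chain : ∀ m n, m ≤ n → ∀ j, T m j <+: T n j := by
    intro m n hmn j
    induction hmn with
    | refl => exact List.prefix_rfl
    | step h ih => exact ih.trans (chain1 _ j)
  -- lengths grow
  have hlen : ∀ n j, n ≤ (T n j).length := by
    intro n
    induction n with
    | zero => intro j; omega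
    | succ n ih =>
      intro j
      have := (hF2 (T n) (g n).2 j).2
      rw [← hgsucc] at this
      have := ih j
      omega
  -- the limit
  let Y : Fin k → ℕ → Bool := fun j m => (T (m + 1) j).getD m false
  -- each T n j is a prefix of Y j
  have hYpre : ∀ n j, IsPrefixOfFun (T n j) (Y j) := by
    intro n j m hm
    show (T (m + 1) j).getD m false = _
    rcases le_total (m + 1) n with h | h
    · have hpre := chain (m + 1) n h j
      have hm1 : m < (T (m + 1) j).length := lt_of_lt_of_le (by omega) (hlen (m + 1) j)
      rw [List.getD_eq_getElem _ _ hm1]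
      simp only [List.get_eq_getElem]
      exact hpre.getElem hm1
    · have hpre := chain n (m + 1) h j
      have hm1 : m < (T (m + 1) j).length := lt_of_lt_of_le hm hpre.length_le
      rw [List.getD_eq_getElem _ _ hm1]
      simp only [List.get_eq_getElem]
      exact (hpre.getElem hm).symm
  -- Y ∈ P as a limit of the witnesses X_n
  let XS : ℕ → Fin k → ℕ → Bool := fun n => ((F (T n) (g n).2).2.1)
  have hXSP : ∀ n, XS n ∈ P := fun n => (hF1 (T n) (g n).2).1
  have hXSpre : ∀ n j, IsPrefixOfFun (T (n + 1) j) (XS n j) := by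
    intro n j
    have := (hF1 (T n) (g n).2).2 j
    rw [← hgsucc] at this
    exact this
  have htd : Filter.Tendsto XS Filter.atTop (nhds Y) := by
    rw [tendsto_pi_nhds]
    intro j
    rw [tendsto_pi_nhds]
    intro m
    have hev : ∀ᶠ n in Filter.atTop, Y j m = XS n j m := by
      filter_upwards [Filter.eventually_ge_atTop m] with n hn
      have hm1 : m < (T (n + 1) j).length := lt_of_lt_of_le (by omega) (hlen (n + 1) j)
      rw [hXSpre n j m hm1, hYpre (n + 1) j m hm1]
    exact Filter.Tendsto.congr' hev tendsto_const_nhds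
  have hYP : Y ∈ P := hcl.mem_of_tendsto htd (Filter.Eventually.of_forall hXSP)
  -- witnesses at each stage
  let I : ℕ → Fin k := fun n => (F (T n) (g n).2).2.2.1
  let a : ℕ → ℕ := fun n => (F (T n) (g n).2).2.2.2.1
  let b : ℕ → ℕ := fun n => (F (T n) (g n).2).2.2.2.2
  have hw : ∀ n, a n < (T (n + 1) (I n)).length ∧ b n < (T (n + 1) (I n)).length ∧
      (T n (I n)).length ≤ a n ∧ (T n (I n)).length ≤ b n ∧
      XS n (I n) (a n) = true ∧ XS n (I n) (b n) = true ∧ a n ∈ A ∧ b n ∉ A := by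
    intro n
    have := hF3 (T n) (g n).2
    rw [← hgsucc] at this
    exact this
  -- key: Y (I n) (a n) = true etc.
  have hYa : ∀ n, Y (I n) (a n) = true ∧ Y (I n) (b n) = true := by
    intro n
    obtain ⟨h1, h2, _, _, h5, h6, _, _⟩ := hw n
    constructor
    · rw [hYpre (n + 1) (I n) (a n) h1, ← hXSpre n (I n) (a n) h1]; exact h5
    · rw [hYpre (n + 1) (I n) (b n) h2, ← hXSpre n (I n) (b n) h2]; exact h6
  -- pigeonhole on I
  obtain ⟨i, hi⟩ := Finite.exists_infinite_fiber I
  have hiinf : (I ⁻¹' {i}).Infinite := Set.infinite_coe_iff.mp hi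
  refine ⟨Y, hYP, i, ?_, ?_⟩
  · apply Set.infinite_of_not_bddAbove
    rintro ⟨N, hN⟩
    obtain ⟨n, hn, hnN⟩ := hiinf.exists_gt N
    have han : N < a n := by
      have := (hw n).2.2.1
      have := hlen n (I n)
      omega
    have : a n ∈ {m | Y i m = true ∧ m ∈ A} := by
      have hIn : I n = i := hn
      exact ⟨hIn ▸ (hYa n).1, (hw n).2.2.2.2.2.2.1⟩
    exact absurd (hN this) (by omega)
  · apply Set.infinite_of_not_bddAbove
    rintro ⟨N, hN⟩
    obtain ⟨n, hn, hnN⟩ := hiinf.exists_gt N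
    have hbn : N < b n := by
      have := (hw n).2.2.2.1
      have := hlen n (I n)
      omega
    have : b n ∈ {m | Y i m = true ∧ m ∉ A} := by
      have hIn : I n = i := hn
      exact ⟨hIn ▸ (hYa n).2, (hw n).2.2.2.2.2.2.2⟩
    exact absurd (hN this) (by omega)
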